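/- arXiv:nlin/0108051 — 6 statements merged into one kernel-verified Lean document; each statement's English description precedes it below -/
import Mathlib

section
/- The polynomial Φ = py⁴ − (1/4)y³·px·py + (3/4)x·y²·py² − (3/64)x²·y⁴ − (1/128)y⁶ is a first integral of the Hamiltonian system with potential V(x,y) = x³ + (3/16)x·y²; that is, px·∂Φ/∂x + py·∂Φ/∂y − (∂V/∂x)·∂Φ/∂px − (∂V/∂y)·∂Φ/∂py = 0 identically on ℝ⁴. -/
/-- Poisson bracket {Φ, H} for H = (px² + py²)/2 + V(x,y). -/
noncomputable def poisson (V : ℝ → ℝ → ℝ) (Φ : ℝ → ℝ → ℝ → ℝ → ℝ)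
    (x y px py : ℝ) : ℝ :=
  px * deriv (fun t => Φ t y px py) x
    + py * deriv (fun t => Φ x t px py) y
    - deriv (fun t => V t y) x * deriv (fun t => Φ x y t py) px
    - deriv (fun t => V x t) y * deriv (fun t => Φ x y px t) py

lemma d6 (c0 c1 c2 c3 c4 c5 c6 x : ℝ) :
    deriv (fun t => c0 + c1 * t + c2 * t ^ 2 + c3 * t ^ 3 + c4 * t ^ 4
      + c5 * t ^ 5 + c6 * t ^ 6) x
    = c1 + 2 * c2 * x + 3 * c3 * x ^ 2 + 4 * c4 * x ^ 3 + 5 * c5 * x ^ 4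
      + 6 * c6 * x ^ 5 := by
  have h : HasDerivAt (fun t : ℝ => c0 + c1 * t + c2 * t ^ 2 + c3 * t ^ 3 + c4 * t ^ 4
      + c5 * t ^ 5 + c6 * t ^ 6)
      (c1 + 2 * c2 * x + 3 * c3 * x ^ 2 + 4 * c4 * x ^ 3 + 5 * c5 * x ^ 4
      + 6 * c6 * x ^ 5) x := by
    have h1 : HasDerivAt (fun t : ℝ => t) 1 x := hasDerivAt_id x
    have := ((((((hasDerivAt_const x c0).add (h1.const_mul c1)).add
      ((hasDerivAt_pow 2 x).const_mul c2)).add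
      ((hasDerivAt_pow 3 x).const_mul c3)).add
      ((hasDerivAt_pow 4 x).const_mul c4)).add
      ((hasDerivAt_pow 5 x).const_mul c5)).add
      ((hasDerivAt_pow 6 x).const_mul c6)
    refine HasDerivAt.congr_deriv this ?_
    push_cast
    ring
  exact h.deriv

theorem stmt1 :
    ∀ x y px py : ℝ,
      poisson (fun x y => x ^ 3 + (3 / 16) * x * y ^ 2)
        (fun x y px py =>
          py ^ 4 - (1 / 4) * y ^ 3 * px * py + (3 / 4) * x * y ^ 2 * py ^ 2
            - (3 / 64) * x ^ 2 * y ^ 4 - (1 / 128) * y ^ 6) x y px py = 0 := by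
  intro x y px py
  unfold poisson
  have e1 : (fun t : ℝ => py ^ 4 - 1 / 4 * y ^ 3 * px * py + 3 / 4 * t * y ^ 2 * py ^ 2
      - 3 / 64 * t ^ 2 * y ^ 4 - 1 / 128 * y ^ 6)
      = fun t : ℝ => (py ^ 4 - 1 / 4 * y ^ 3 * px * py - 1 / 128 * y ^ 6)
        + (3 / 4 * y ^ 2 * py ^ 2) * t + (-(3 / 64) * y ^ 4) * t ^ 2 + 0 * t ^ 3
        + 0 * t ^ 4 + 0 * t ^ 5 + 0 * t ^ 6 := by funext t; ring
  have e2 : (fun t : ℝ => py ^ 4 - 1 / 4 * t ^ 3 * px * py + 3 / 4 * x * t ^ 2 * py ^ 2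
      - 3 / 64 * x ^ 2 * t ^ 4 - 1 / 128 * t ^ 6)
      = fun t : ℝ => py ^ 4 + 0 * t + (3 / 4 * x * py ^ 2) * t ^ 2
        + (-(1 / 4) * px * py) * t ^ 3 + (-(3 / 64) * x ^ 2) * t ^ 4 + 0 * t ^ 5
        + (-(1 / 128)) * t ^ 6 := by funext t; ring
  have e3 : (fun t : ℝ => py ^ 4 - 1 / 4 * y ^ 3 * t * py + 3 / 4 * x * y ^ 2 * py ^ 2
      - 3 / 64 * x ^ 2 * y ^ 4 - 1 / 128 * y ^ 6)
      = fun t : ℝ => (py ^ 4 + 3 / 4 * x * y ^ 2 * py ^ 2 - 3 / 64 * x ^ 2 * y ^ 4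
        - 1 / 128 * y ^ 6) + (-(1 / 4) * y ^ 3 * py) * t + 0 * t ^ 2 + 0 * t ^ 3
        + 0 * t ^ 4 + 0 * t ^ 5 + 0 * t ^ 6 := by funext t; ring
  have e4 : (fun t : ℝ => t ^ 4 - 1 / 4 * y ^ 3 * px * t + 3 / 4 * x * y ^ 2 * t ^ 2
      - 3 / 64 * x ^ 2 * y ^ 4 - 1 / 128 * y ^ 6)
      = fun t : ℝ => (-(3 / 64) * x ^ 2 * y ^ 4 - 1 / 128 * y ^ 6)
        + (-(1 / 4) * y ^ 3 * px) * t + (3 / 4 * x * y ^ 2) * t ^ 2 + 0 * t ^ 3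
        + 1 * t ^ 4 + 0 * t ^ 5 + 0 * t ^ 6 := by funext t; ring
  have e5 : (fun t : ℝ => t ^ 3 + 3 / 16 * t * y ^ 2)
      = fun t : ℝ => 0 + (3 / 16 * y ^ 2) * t + 0 * t ^ 2 + 1 * t ^ 3 + 0 * t ^ 4
        + 0 * t ^ 5 + 0 * t ^ 6 := by funext t; ring
  have e6 : (fun t : ℝ => x ^ 3 + 3 / 16 * x * t ^ 2)
      = fun t : ℝ => x ^ 3 + 0 * t + (3 / 16 * x) * t ^ 2 + 0 * t ^ 3 + 0 * t ^ 4
        + 0 * t ^ 5 + 0 * t ^ 6 := by funext t; ring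
  rw [e1, e2, e3, e4, e5, e6, d6, d6, d6, d6, d6, d6]
  ring
end

section
/- For every natural number k ≥ 1, the polynomial Φ = py·(y·px − x·py) + (1/2)y²·V_{k-1}(x,y), where V_{k-1}(x,y) = Σ_{m=0}^{⌊(k-1)/2⌋} 2^{−2m}·C(k−1−m, m)·x^{k−1−2m}·y^{2m}, is a first integral of the Hamiltonian system with potential V_k(x,y) = Σ_{m=0}^{⌊k/2⌋} 2^{−2m}·C(k−m, m)·x^{k−2m}·y^{2m}; that is, px·∂Φ/∂x + py·∂Φ/∂y − (∂V_k/∂x)·∂Φ/∂px − (∂V_k/∂y)·∂Φ/∂py = 0 identically. -/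
/-- The parabolic-separable homogeneous polynomial potential of degree `j`. -/
noncomputable def Vpar (j : ℕ) (x y : ℝ) : ℝ :=
  ∑ m ∈ Finset.range (j / 2 + 1),
    ((2 : ℝ) ^ (2 * m))⁻¹ * (Nat.choose (j - m) m : ℝ) * x ^ (j - 2 * m) * y ^ (2 * m)

private lemma hchoose0 {j m : ℕ} (h : j / 2 < m) : Nat.choose (j - m) m = 0 :=
  Nat.choose_eq_zero_of_lt (by omega)

private lemma sum_ext (j N : ℕ) (h : j / 2 + 1 ≤ N) (f : ℕ → ℝ)
    (hf : ∀ m, j / 2 < m → f m = 0) :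
    ∑ m ∈ Finset.range (j / 2 + 1), f m = ∑ m ∈ Finset.range N, f m :=
  Finset.sum_subset (Finset.range_subset_range.2 h)
    (fun m _ hm2 => hf m (by simp only [Finset.mem_range, not_lt] at hm2; omega))

private lemma hDx (j : ℕ) (y x : ℝ) :
    HasDerivAt (fun t => Vpar j t y)
      (∑ m ∈ Finset.range (j / 2 + 1),
        ((2 : ℝ) ^ (2 * m))⁻¹ * (Nat.choose (j - m) m : ℝ) *
          ((j - 2 * m : ℕ) * x ^ (j - 2 * m - 1)) * y ^ (2 * m)) x := by
  unfold Vpar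
  exact HasDerivAt.fun_sum fun m _ =>
    ((hasDerivAt_pow (j - 2 * m) x).const_mul
      (((2 : ℝ) ^ (2 * m))⁻¹ * (Nat.choose (j - m) m : ℝ))).mul_const _

private lemma hDy (j : ℕ) (x y : ℝ) :
    HasDerivAt (fun t => Vpar j x t)
      (∑ m ∈ Finset.range (j / 2 + 1),
        ((2 : ℝ) ^ (2 * m))⁻¹ * (Nat.choose (j - m) m : ℝ) * x ^ (j - 2 * m) *
          ((2 * m : ℕ) * y ^ (2 * m - 1))) y := by
  unfold Vpar
  exact HasDerivAt.fun_sum fun m _ =>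
    (hasDerivAt_pow (2 * m) y).const_mul
      (((2 : ℝ) ^ (2 * m))⁻¹ * (Nat.choose (j - m) m : ℝ) * x ^ (j - 2 * m))

private lemma keyI (k : ℕ) (hk : 1 ≤ k) (x y : ℝ) :
    (1 / 2) * y ^ 2 * (∑ m ∈ Finset.range ((k - 1) / 2 + 1),
        ((2 : ℝ) ^ (2 * m))⁻¹ * (Nat.choose (k - 1 - m) m : ℝ) *
          ((k - 1 - 2 * m : ℕ) * x ^ (k - 1 - 2 * m - 1)) * y ^ (2 * m))
    = y * (∑ m ∈ Finset.range (k / 2 + 1),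
        ((2 : ℝ) ^ (2 * m))⁻¹ * (Nat.choose (k - m) m : ℝ) * x ^ (k - 2 * m) *
          ((2 * m : ℕ) * y ^ (2 * m - 1))) := by
  rw [sum_ext (k - 1) (k + 1) (by omega) _ (fun m hm => by rw [hchoose0 hm]; ring),
      sum_ext k (k + 2) (by omega) _ (fun m hm => by rw [hchoose0 hm]; ring),
      Finset.mul_sum, Finset.mul_sum]
  conv_rhs => rw [Finset.sum_range_succ']
  norm_num
  apply Finset.sum_congr rfl
  intro m _
  have e1 : k - 1 - 2 * m - 1 = k - 2 * (m + 1) := by omega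
  have e2 : 2 * (m + 1) - 1 = 2 * m + 1 := by omega
  have e3 : k - (m + 1) = k - 1 - m := by omega
  rw [e1, e2, e3]
  have hnat : Nat.choose (k - 1 - m) (m + 1) * (m + 1)
      = Nat.choose (k - 1 - m) m * (k - 1 - 2 * m) := by
    rw [Nat.choose_succ_right_eq]; congr 1; omega
  have hr : (Nat.choose (k - 1 - m) (m + 1) : ℝ) * ((m : ℝ) + 1)
      = (Nat.choose (k - 1 - m) m : ℝ) * ((k - 1 - 2 * m : ℕ) : ℝ) := by
    exact_mod_cast hnat
  have hp : ((2 : ℝ) ^ (2 * (m + 1)))⁻¹ = ((2 : ℝ) ^ (2 * m))⁻¹ / 4 := by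
    rw [show 2 * (m + 1) = 2 * m + 2 by ring, pow_add]
    norm_num
    ring
  rw [hp]
  linear_combination (-(1 / 2) * ((2 : ℝ) ^ (2 * m))⁻¹ * x ^ (k - 2 * (m + 1)) * y ^ (2 * m + 2)) * hr

private lemma termII (k m : ℕ) (hk : 1 ≤ k) (x y : ℝ) :
    y * (((2 : ℝ) ^ (2 * m))⁻¹ * (Nat.choose (k - 1 - m) m : ℝ) * x ^ (k - 1 - 2 * m) * y ^ (2 * m))
    + (1 / 2) * y ^ 2 * (((2 : ℝ) ^ (2 * m))⁻¹ * (Nat.choose (k - 1 - m) m : ℝ) * x ^ (k - 1 - 2 * m) *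
        ((2 * m : ℕ) * y ^ (2 * m - 1)))
    + 2 * x * (((2 : ℝ) ^ (2 * (m + 1)))⁻¹ * (Nat.choose (k - (m + 1)) (m + 1) : ℝ) * x ^ (k - 2 * (m + 1)) *
        ((2 * (m + 1) : ℕ) * y ^ (2 * (m + 1) - 1)))
    = y * (((2 : ℝ) ^ (2 * m))⁻¹ * (Nat.choose (k - m) m : ℝ) *
        ((k - 2 * m : ℕ) * x ^ (k - 2 * m - 1)) * y ^ (2 * m)) := by
  rcases le_or_gt k (2 * m) with hc | hc
  · have c1 : Nat.choose (k - 1 - m) m = 0 := Nat.choose_eq_zero_of_lt (by omega)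
    have c3 : Nat.choose (k - (m + 1)) (m + 1) = 0 := Nat.choose_eq_zero_of_lt (by omega)
    have c2 : k - 2 * m = 0 := by omega
    rw [c1, c3, c2]
    norm_num
  rcases eq_or_lt_of_le (Nat.succ_le_of_lt hc) with hc2 | hbig
  · have c3 : Nat.choose (k - (m + 1)) (m + 1) = 0 := Nat.choose_eq_zero_of_lt (by omega)
    have e1 : k - 1 - 2 * m = 0 := by omega
    have e2 : k - 2 * m = 1 := by omega
    have e3 : k - 2 * m - 1 = 0 := by omega
    have e4 : k - 1 - m = m := by omega
    have e5 : k - m = m + 1 := by omega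
    rw [c3, e1, e3, e2, e4, e5, Nat.choose_self, Nat.choose_succ_self_right]
    rcases Nat.eq_zero_or_pos m with rfl | hm
    · norm_num
    · obtain ⟨m', rfl⟩ : ∃ m', m = m' + 1 := ⟨m - 1, by omega⟩
      rw [show 2 * (m' + 1) - 1 = 2 * m' + 1 by omega]
      push_cast
      ring
  · obtain ⟨d, rfl⟩ : ∃ d, k = 2 * m + 2 + d := ⟨k - (2 * m + 2), by omega⟩
    have e1 : 2 * m + 2 + d - 1 - 2 * m = d + 1 := by omega
    have e2 : 2 * m + 2 + d - 2 * m = d + 2 := by omega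
    have e3 : 2 * m + 2 + d - 2 * m - 1 = d + 1 := by omega
    have e4 : 2 * m + 2 + d - 1 - m = m + 1 + d := by omega
    have e5 : 2 * m + 2 + d - (m + 1) = m + 1 + d := by omega
    have e6 : 2 * m + 2 + d - m = m + 2 + d := by omega
    have e7 : 2 * m + 2 + d - 2 * (m + 1) = d := by omega
    have e8 : 2 * (m + 1) - 1 = 2 * m + 1 := by omega
    rw [e1, e3, e2, e4, e5, e6, e7, e8]
    have hp : ((2 : ℝ) ^ (2 * (m + 1)))⁻¹ = ((2 : ℝ) ^ (2 * m))⁻¹ / 4 := by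
      rw [show 2 * (m + 1) = 2 * m + 2 by ring, pow_add]
      norm_num
      ring
    rw [hp]
    have hnat : (m + 1) * (Nat.choose (m + 1 + d) m + Nat.choose (m + 1 + d) (m + 1))
        = (d + 2) * Nat.choose (m + 2 + d) m := by
      have p1 : Nat.choose (m + 1 + d) m + Nat.choose (m + 1 + d) (m + 1)
          = Nat.choose (m + 2 + d) (m + 1) := by
        rw [show m + 2 + d = (m + 1 + d) + 1 by omega, Nat.choose_succ_succ]
      have p2 := Nat.choose_succ_right_eq (m + 2 + d) m
      rw [show m + 2 + d - m = d + 2 by omega] at p2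
      rw [p1, mul_comm, p2]
      ring
    have hr : ((m : ℝ) + 1) * ((Nat.choose (m + 1 + d) m : ℝ) + (Nat.choose (m + 1 + d) (m + 1) : ℝ))
        = ((d : ℝ) + 2) * (Nat.choose (m + 2 + d) m : ℝ) := by exact_mod_cast hnat
    rcases Nat.eq_zero_or_pos m with rfl | hm
    · norm_num
      norm_num at hr
      linear_combination (y * x ^ (d + 1) * ((2 : ℝ) ^ (2 * 0))⁻¹) * hr
    · obtain ⟨m', rfl⟩ : ∃ m', m = m' + 1 := ⟨m - 1, by omega⟩
      rw [show 2 * (m' + 1) - 1 = 2 * m' + 1 by omega]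
      push_cast
      push_cast at hr
      linear_combination (y ^ (2 * (m' + 1) + 1) * x ^ (d + 1) * ((2 : ℝ) ^ (2 * (m' + 1)))⁻¹) * hr

private lemma keyII (k : ℕ) (hk : 1 ≤ k) (x y : ℝ) :
    y * (∑ m ∈ Finset.range ((k - 1) / 2 + 1),
        ((2 : ℝ) ^ (2 * m))⁻¹ * (Nat.choose (k - 1 - m) m : ℝ) * x ^ (k - 1 - 2 * m) * y ^ (2 * m))
    + (1 / 2) * y ^ 2 * (∑ m ∈ Finset.range ((k - 1) / 2 + 1),
        ((2 : ℝ) ^ (2 * m))⁻¹ * (Nat.choose (k - 1 - m) m : ℝ) * x ^ (k - 1 - 2 * m) *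
          ((2 * m : ℕ) * y ^ (2 * m - 1)))
    + (2 * x) * (∑ m ∈ Finset.range (k / 2 + 1),
        ((2 : ℝ) ^ (2 * m))⁻¹ * (Nat.choose (k - m) m : ℝ) * x ^ (k - 2 * m) *
          ((2 * m : ℕ) * y ^ (2 * m - 1)))
    = y * (∑ m ∈ Finset.range (k / 2 + 1),
        ((2 : ℝ) ^ (2 * m))⁻¹ * (Nat.choose (k - m) m : ℝ) *
          ((k - 2 * m : ℕ) * x ^ (k - 2 * m - 1)) * y ^ (2 * m)) := by
  rw [sum_ext (k - 1) (k + 1) (by omega) _ (fun m hm => by rw [hchoose0 hm]; ring),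
      sum_ext (k - 1) (k + 1) (by omega) _ (fun m hm => by rw [hchoose0 hm]; ring),
      sum_ext k (k + 2) (by omega) _ (fun m hm => by rw [hchoose0 hm]; ring),
      sum_ext k (k + 1) (by omega) _ (fun m hm => by rw [hchoose0 hm]; ring)]
  have hsh : (2 * x) * (∑ m ∈ Finset.range (k + 2),
      ((2 : ℝ) ^ (2 * m))⁻¹ * (Nat.choose (k - m) m : ℝ) * x ^ (k - 2 * m) *
        ((2 * m : ℕ) * y ^ (2 * m - 1)))
      = ∑ m ∈ Finset.range (k + 1),
        2 * x * (((2 : ℝ) ^ (2 * (m + 1)))⁻¹ * (Nat.choose (k - (m + 1)) (m + 1) : ℝ) *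
          x ^ (k - 2 * (m + 1)) * ((2 * (m + 1) : ℕ) * y ^ (2 * (m + 1) - 1))) := by
    rw [Finset.mul_sum, Finset.sum_range_succ']
    norm_num
  rw [hsh, Finset.mul_sum, Finset.mul_sum, Finset.mul_sum, ← Finset.sum_add_distrib,
    ← Finset.sum_add_distrib]
  exact Finset.sum_congr rfl fun m _ => termII k m hk x y

theorem stmt4 (k : ℕ) (hk : 1 ≤ k) :
    ∀ x y px py : ℝ,
      poisson (Vpar k)
        (fun x y px py =>
          py * (y * px - x * py) + (1 / 2) * y ^ 2 * Vpar (k - 1) x y) x y px py = 0 := by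
  intro x y px py
  have d1 : HasDerivAt (fun t => py * (y * px - t * py) + (1 / 2) * y ^ 2 * Vpar (k - 1) t y)
      (py * (0 - 1 * py) + (1 / 2) * y ^ 2 *
        (∑ m ∈ Finset.range ((k - 1) / 2 + 1),
          ((2 : ℝ) ^ (2 * m))⁻¹ * (Nat.choose (k - 1 - m) m : ℝ) *
            ((k - 1 - 2 * m : ℕ) * x ^ (k - 1 - 2 * m - 1)) * y ^ (2 * m))) x :=
    (((hasDerivAt_const x (y * px)).sub ((hasDerivAt_id x).mul_const py)).const_mul py).add
      ((hDx (k - 1) y x).const_mul ((1 / 2) * y ^ 2))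
  have d2 : HasDerivAt (fun t => py * (t * px - x * py) + (1 / 2) * t ^ 2 * Vpar (k - 1) x t)
      (py * (1 * px - 0) + (((1 / 2) * (2 * y ^ 1)) * Vpar (k - 1) x y + ((1 / 2) * y ^ 2) *
        (∑ m ∈ Finset.range ((k - 1) / 2 + 1),
          ((2 : ℝ) ^ (2 * m))⁻¹ * (Nat.choose (k - 1 - m) m : ℝ) * x ^ (k - 1 - 2 * m) *
            ((2 * m : ℕ) * y ^ (2 * m - 1))))) y := by
    have h1 : HasDerivAt (fun t : ℝ => py * (t * px - x * py)) (py * (1 * px - 0)) y :=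
      (((hasDerivAt_id y).mul_const px).sub (hasDerivAt_const y (x * py))).const_mul py
    have h2 := ((hasDerivAt_pow 2 y).const_mul (1 / 2 : ℝ)).fun_mul (hDy (k - 1) x y)
    exact h1.add (by simpa using h2)
  have d3 : HasDerivAt (fun t => py * (y * t - x * py) + (1 / 2) * y ^ 2 * Vpar (k - 1) x y)
      (py * (y * 1 - 0)) px := by
    have h1 : HasDerivAt (fun t : ℝ => py * (y * t - x * py)) (py * (y * 1 - 0)) px :=
      ((((hasDerivAt_id px).const_mul y).sub (hasDerivAt_const px (x * py))).const_mul py)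
    simpa using h1.add_const ((1 / 2) * y ^ 2 * Vpar (k - 1) x y)
  have d4 : HasDerivAt (fun t => t * (y * px - x * t) + (1 / 2) * y ^ 2 * Vpar (k - 1) x y)
      (1 * (y * px - x * py) + py * (0 - x * 1)) py := by
    have h1 : HasDerivAt (fun t : ℝ => t * (y * px - x * t))
        (1 * (y * px - x * py) + py * (0 - x * 1)) py :=
      (hasDerivAt_id py).mul ((hasDerivAt_const py (y * px)).sub ((hasDerivAt_id py).const_mul x))
    simpa using h1.add_const ((1 / 2) * y ^ 2 * Vpar (k - 1) x y)
  unfold poisson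
  rw [d1.deriv, d2.deriv, d3.deriv, d4.deriv, (hDx k y x).deriv, (hDy k x y).deriv]
  have hI := keyI k hk x y
  have hII := keyII k hk x y
  unfold Vpar at *
  linear_combination px * hI + py * hII
end

section
/- For every natural number k ≥ 1 and all real x, y with r = √(x²+y²) > 0, the expression (1/r)·[((r+x)/2)^{k+1} + (−1)^k·((r−x)/2)^{k+1}] equals the polynomial Σ_{m=0}^{⌊k/2⌋} 2^{−2m}·C(k−m, m)·x^{k−2m}·y^{2m}. -/
noncomputable def Sfib (s t : ℝ) (k : ℕ) : ℝ :=
  ∑ m ∈ Finset.range (k / 2 + 1),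
    (Nat.choose (k - m) m : ℝ) * s ^ (k - 2 * m) * t ^ m

lemma Sfib_rec (s t : ℝ) (k : ℕ) :
    Sfib s t (k + 2) = s * Sfib s t (k + 1) + t * Sfib s t k := by
  have hA : Sfib s t (k + 2)
      = s ^ (k + 2)
        + (∑ m ∈ Finset.range (k / 2 + 1),
            (Nat.choose (k - m) m : ℝ) * s ^ (k - 2 * m) * t ^ (m + 1))
        + (∑ m ∈ Finset.range (k / 2 + 1),
            (Nat.choose (k - m) (m + 1) : ℝ) * s ^ (k - 2 * m) * t ^ (m + 1)) := by
    have hdiv : (k + 2) / 2 = k / 2 + 1 := by omega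
    rw [Sfib, hdiv, Finset.sum_range_succ']
    have step1 : ∀ m ∈ Finset.range (k / 2 + 1),
        ((Nat.choose (k + 2 - (m + 1)) (m + 1) : ℝ)) * s ^ (k + 2 - 2 * (m + 1)) * t ^ (m + 1)
          = (Nat.choose (k - m) m : ℝ) * s ^ (k - 2 * m) * t ^ (m + 1)
            + (Nat.choose (k - m) (m + 1) : ℝ) * s ^ (k - 2 * m) * t ^ (m + 1) := by
      intro m hm
      have hm' : m ≤ k / 2 := by
        have := Finset.mem_range.mp hm; omega
      have hmk : m ≤ k := le_trans hm' (Nat.div_le_self k 2)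
      have h1 : k + 2 - (m + 1) = (k - m) + 1 := by omega
      have h2 : k + 2 - 2 * (m + 1) = k - 2 * m := by omega
      rw [h1, h2, Nat.choose_succ_succ]
      push_cast; ring
    rw [Finset.sum_congr rfl step1, Finset.sum_add_distrib]
    simp
    ring
  have hB : t * Sfib s t k
      = ∑ m ∈ Finset.range (k / 2 + 1),
          (Nat.choose (k - m) m : ℝ) * s ^ (k - 2 * m) * t ^ (m + 1) := by
    rw [Sfib, Finset.mul_sum]
    refine Finset.sum_congr rfl fun m hm => ?_
    rw [pow_succ]; ring
  have hC : s * Sfib s t (k + 1)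
      = s ^ (k + 2)
        + ∑ m ∈ Finset.range (k / 2 + 1),
            (Nat.choose (k - m) (m + 1) : ℝ) * s ^ (k - 2 * m) * t ^ (m + 1) := by
    have hC1 : s * Sfib s t (k + 1)
        = ∑ m ∈ Finset.range ((k + 1) / 2 + 1),
            (Nat.choose (k + 1 - m) m : ℝ) * s ^ (k + 2 - 2 * m) * t ^ m := by
      rw [Sfib, Finset.mul_sum]
      refine Finset.sum_congr rfl fun m hm => ?_
      have hm' : m ≤ (k + 1) / 2 := by
        have := Finset.mem_range.mp hm; omega
      have h : k + 2 - 2 * m = (k + 1 - 2 * m) + 1 := by omega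
      rw [h, pow_succ]; ring
    rw [hC1, Finset.sum_range_succ']
    have step2 : ∀ m ∈ Finset.range ((k + 1) / 2),
        ((Nat.choose (k + 1 - (m + 1)) (m + 1) : ℝ)) * s ^ (k + 2 - 2 * (m + 1)) * t ^ (m + 1)
          = (Nat.choose (k - m) (m + 1) : ℝ) * s ^ (k - 2 * m) * t ^ (m + 1) := by
      intro m hm
      have h1 : k + 1 - (m + 1) = k - m := by omega
      have h2 : k + 2 - 2 * (m + 1) = k - 2 * m := by omega
      rw [h1, h2]
    rw [Finset.sum_congr rfl step2]
    have hsub : Finset.range ((k + 1) / 2) ⊆ Finset.range (k / 2 + 1) := by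
      intro m hm
      simp only [Finset.mem_range] at *
      omega
    rw [Finset.sum_subset hsub ?_]
    · simp; ring
    · intro m hm hnm
      simp only [Finset.mem_range] at *
      have hk2m : k - m < m + 1 := by omega
      rw [Nat.choose_eq_zero_of_lt hk2m]
      simp
  rw [hA, hB, hC]
  ring

lemma Sfib_gen (u w : ℝ) (k : ℕ) :
    u ^ (k + 1) - w ^ (k + 1) = (u - w) * Sfib (u + w) (-(u * w)) k := by
  induction k using Nat.twoStepInduction with
  | zero => simp [Sfib]
  | one => simp [Sfib]; ring
  | more k ih1 ih2 =>
    rw [Sfib_rec]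
    have : u ^ (k + 2 + 1) - w ^ (k + 2 + 1)
        = (u + w) * (u ^ (k + 1 + 1) - w ^ (k + 1 + 1))
          + (-(u * w)) * (u ^ (k + 1) - w ^ (k + 1)) := by ring
    rw [this, ih1, ih2]
    ring

theorem stmt6 (k : ℕ) (hk : 1 ≤ k) (x y r : ℝ)
    (hr : r = Real.sqrt (x ^ 2 + y ^ 2)) (hr0 : 0 < r) :
    (1 / r) * (((r + x) / 2) ^ (k + 1) + (-1 : ℝ) ^ k * ((r - x) / 2) ^ (k + 1)) =
      ∑ m ∈ Finset.range (k / 2 + 1),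
        ((2 : ℝ) ^ (2 * m))⁻¹ * (Nat.choose (k - m) m : ℝ)
          * x ^ (k - 2 * m) * y ^ (2 * m) := by
  have hr2 : r ^ 2 = x ^ 2 + y ^ 2 := by
    rw [hr, Real.sq_sqrt (by positivity)]
  set A : ℝ := (r + x) / 2 with hA
  set B : ℝ := (r - x) / 2 with hB
  have hsum : A + -B = x := by rw [hA, hB]; ring
  have hdiff : A - -B = r := by rw [hA, hB]; ring
  have hprod : -(A * -B) = y ^ 2 / 4 := by
    have hexp : -(A * -B) = (r ^ 2 - x ^ 2) / 4 := by rw [hA, hB]; ring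
    rw [hexp, hr2]; ring
  have key := Sfib_gen A (-B) k
  rw [hsum, hdiff, hprod] at key
  have hlhs : A ^ (k + 1) + (-1 : ℝ) ^ k * B ^ (k + 1)
      = A ^ (k + 1) - (-B) ^ (k + 1) := by
    have h := neg_pow B (k + 1)
    rw [h, pow_succ]
    ring
  have hrne : r ≠ 0 := ne_of_gt hr0
  rw [hlhs, key, one_div, inv_mul_cancel_left₀ hrne, Sfib]
  refine Finset.sum_congr rfl fun m hm => ?_
  have hy : (y ^ 2 / 4) ^ m = ((2 : ℝ) ^ (2 * m))⁻¹ * y ^ (2 * m) := by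
    rw [div_pow, ← pow_mul, show (4 : ℝ) = 2 ^ 2 by norm_num, ← pow_mul,
      div_eq_inv_mul]
  rw [hy]
  ring
end

section
/- Every polynomial solution (A₀, A₁, A₂, A₃) in ℝ[x,y] of the system ∂A₀/∂x = 0, ∂A₀/∂y + ∂A₁/∂x = 0, ∂A₁/∂y + ∂A₂/∂x = 0, ∂A₂/∂y + ∂A₃/∂x = 0, ∂A₃/∂y = 0, with each Aᵢ homogeneous of the same degree d ≤ 3, is a linear combination of the following: for d = 3, (y³, −3x y², 3x²y, −x³) (i.e., coefficients of (y·px − x·py)³); for d = 2, the coefficient vectors of px·(y px − x py)² and py·(y px − x py)²; for d = 1, the coefficient vectors of px²(y px − x py), px py(y px − x py), py²(y px − x py); for d = 0, arbitrary constants (a₀, b₀, c₀, d₀). -/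
open MvPolynomial

/-- ∂/∂x on polynomials in two variables. -/
noncomputable def dX (p : MvPolynomial (Fin 2) ℝ) : MvPolynomial (Fin 2) ℝ :=
  MvPolynomial.pderiv (0 : Fin 2) p

/-- ∂/∂y on polynomials in two variables. -/
noncomputable def dY (p : MvPolynomial (Fin 2) ℝ) : MvPolynomial (Fin 2) ℝ :=
  MvPolynomial.pderiv (1 : Fin 2) p

noncomputable def ee (a b : ℕ) : Fin 2 →₀ ℕ := Finsupp.single 0 a + Finsupp.single 1 b

@[simp] lemma ee_apply0 (a b : ℕ) : ee a b 0 = a := by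
  simp [ee, Finsupp.single_apply]

@[simp] lemma ee_apply1 (a b : ℕ) : ee a b 1 = b := by
  simp [ee, Finsupp.single_apply]

@[simp] lemma ee_inj {a b c d : ℕ} : ee a b = ee c d ↔ a = c ∧ b = d := by
  constructor
  · intro h
    exact ⟨by rw [← ee_apply0 a b, h, ee_apply0], by rw [← ee_apply1 a b, h, ee_apply1]⟩
  · rintro ⟨rfl, rfl⟩; rfl

lemma ee_rep (m : Fin 2 →₀ ℕ) : m = ee (m 0) (m 1) := by
  ext i
  fin_cases i <;> simp [ee, Finsupp.single_apply]

lemma ee_subX (a b : ℕ) : ee (a+1) b - Finsupp.single 0 1 = ee a b := by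
  ext i
  fin_cases i <;> simp [ee, Finsupp.tsub_apply, Finsupp.single_apply]

lemma ee_subY (a b : ℕ) : ee a (b+1) - Finsupp.single 1 1 = ee a b := by
  ext i
  fin_cases i <;> simp [ee, Finsupp.tsub_apply, Finsupp.single_apply]

lemma ee_degree (m : Fin 2 →₀ ℕ) : m.degree = m 0 + m 1 := by
  rw [Finsupp.degree]
  change ∑ i ∈ m.support, m i = m 0 + m 1
  rw [show ∑ i ∈ m.support, m i = ∑ i : Fin 2, m i from
    Finset.sum_subset (Finset.subset_univ _)
      (fun i _ hi => Finsupp.notMem_support_iff.mp hi)]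
  exact Fin.sum_univ_two m

lemma hom_decomp (d : ℕ) (p : MvPolynomial (Fin 2) ℝ) (hp : p.IsHomogeneous d) :
    p = ∑ k ∈ Finset.range (d+1), monomial (ee k (d-k)) (coeff (ee k (d-k)) p) := by
  ext m
  rw [coeff_sum]
  by_cases hm : m 0 + m 1 = d
  · rw [Finset.sum_eq_single (m 0)]
    · rw [coeff_monomial,
        if_pos (by rw [show d - m 0 = m 1 by omega]; exact (ee_rep m).symm),
        show d - m 0 = m 1 by omega, ← ee_rep m]
    · intro k hk hkne
      rw [coeff_monomial, if_neg]
      intro hEq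
      rw [ee_rep m, ee_inj] at hEq
      exact hkne hEq.1
    · intro h
      exact absurd (Finset.mem_range.mpr (by omega)) h
  · rw [hp.coeff_eq_zero (by rw [ee_degree]; exact hm)]
    symm
    apply Finset.sum_eq_zero
    intro k hk
    rw [coeff_monomial, if_neg]
    intro hEq
    have h0 : (ee k (d-k)) 0 = m 0 := by rw [hEq]
    have h1 : (ee k (d-k)) 1 = m 1 := by rw [hEq]
    rw [ee_apply0] at h0; rw [ee_apply1] at h1
    have := Finset.mem_range.mp hk
    omega

lemma mono_eq (a b : ℕ) (c : ℝ) :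
    (monomial (ee a b) c : MvPolynomial (Fin 2) ℝ) = C c * (X 0 ^ a * X 1 ^ b) := by
  simp [X_pow_eq_monomial, monomial_mul, C_mul_monomial, ee]

example : True := trivial

@[simp] lemma sX10 : ee 1 0 - Finsupp.single 0 1 = ee 0 0 := ee_subX 0 0
@[simp] lemma sX20 : ee 2 0 - Finsupp.single 0 1 = ee 1 0 := ee_subX 1 0
@[simp] lemma sX30 : ee 3 0 - Finsupp.single 0 1 = ee 2 0 := ee_subX 2 0
@[simp] lemma sX11 : ee 1 1 - Finsupp.single 0 1 = ee 0 1 := ee_subX 0 1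
@[simp] lemma sX21 : ee 2 1 - Finsupp.single 0 1 = ee 1 1 := ee_subX 1 1
@[simp] lemma sX12 : ee 1 2 - Finsupp.single 0 1 = ee 0 2 := ee_subX 0 2
@[simp] lemma sY01 : ee 0 1 - Finsupp.single 1 1 = ee 0 0 := ee_subY 0 0
@[simp] lemma sY02 : ee 0 2 - Finsupp.single 1 1 = ee 0 1 := ee_subY 0 1
@[simp] lemma sY03 : ee 0 3 - Finsupp.single 1 1 = ee 0 2 := ee_subY 0 2
@[simp] lemma sY11 : ee 1 1 - Finsupp.single 1 1 = ee 1 0 := ee_subY 1 0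
@[simp] lemma sY21 : ee 2 1 - Finsupp.single 1 1 = ee 2 0 := ee_subY 2 0
@[simp] lemma sY12 : ee 1 2 - Finsupp.single 1 1 = ee 1 1 := ee_subY 1 1

lemma hom3 (p : MvPolynomial (Fin 2) ℝ) (hp : p.IsHomogeneous 3) :
    ∃ c0 c1 c2 c3 : ℝ, p = monomial (ee 0 3) c0 + monomial (ee 1 2) c1
      + monomial (ee 2 1) c2 + monomial (ee 3 0) c3 := by
  refine ⟨coeff (ee 0 3) p, coeff (ee 1 2) p, coeff (ee 2 1) p, coeff (ee 3 0) p, ?_⟩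
  conv_lhs => rw [hom_decomp 3 p hp]
  norm_num [Finset.sum_range_succ]

lemma hom2 (p : MvPolynomial (Fin 2) ℝ) (hp : p.IsHomogeneous 2) :
    ∃ c0 c1 c2 : ℝ, p = monomial (ee 0 2) c0 + monomial (ee 1 1) c1
      + monomial (ee 2 0) c2 := by
  refine ⟨coeff (ee 0 2) p, coeff (ee 1 1) p, coeff (ee 2 0) p, ?_⟩
  conv_lhs => rw [hom_decomp 2 p hp]
  norm_num [Finset.sum_range_succ]

lemma hom1 (p : MvPolynomial (Fin 2) ℝ) (hp : p.IsHomogeneous 1) :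
    ∃ c0 c1 : ℝ, p = monomial (ee 0 1) c0 + monomial (ee 1 0) c1 := by
  refine ⟨coeff (ee 0 1) p, coeff (ee 1 0) p, ?_⟩
  conv_lhs => rw [hom_decomp 1 p hp]
  norm_num [Finset.sum_range_succ]

lemma hom0 (p : MvPolynomial (Fin 2) ℝ) (hp : p.IsHomogeneous 0) :
    ∃ c0 : ℝ, p = C c0 := by
  refine ⟨coeff (ee 0 0) p, ?_⟩
  conv_lhs => rw [hom_decomp 0 p hp]
  have : ee 0 0 = 0 := by ext i; fin_cases i <;> simp [ee]
  norm_num [Finset.sum_range_succ, this, monomial_zero']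

theorem stmt11 (d : ℕ) (hd : d ≤ 3) (A0 A1 A2 A3 : MvPolynomial (Fin 2) ℝ)
    (h0 : A0.IsHomogeneous d) (h1 : A1.IsHomogeneous d)
    (h2 : A2.IsHomogeneous d) (h3 : A3.IsHomogeneous d)
    (e1 : dX A0 = 0) (e2 : dY A0 + dX A1 = 0) (e3 : dY A1 + dX A2 = 0)
    (e4 : dY A2 + dX A3 = 0) (e5 : dY A3 = 0) :
    (d = 3 → ∃ a : ℝ,
        A0 = C a * X 1 ^ 3 ∧ A1 = C (-3 * a) * (X 0 * X 1 ^ 2)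
        ∧ A2 = C (3 * a) * (X 0 ^ 2 * X 1) ∧ A3 = C (-a) * X 0 ^ 3)
    ∧ (d = 2 → ∃ a b : ℝ,
        A0 = C a * X 1 ^ 2
        ∧ A1 = C (-2 * a) * (X 0 * X 1) + C b * X 1 ^ 2
        ∧ A2 = C a * X 0 ^ 2 + C (-2 * b) * (X 0 * X 1)
        ∧ A3 = C b * X 0 ^ 2)
    ∧ (d = 1 → ∃ a b c : ℝ,
        A0 = C a * X 1
        ∧ A1 = C (-a) * X 0 + C b * X 1
        ∧ A2 = C (-b) * X 0 + C c * X 1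
        ∧ A3 = C (-c) * X 0)
    ∧ (d = 0 → ∃ a b c e : ℝ,
        A0 = C a ∧ A1 = C b ∧ A2 = C c ∧ A3 = C e) := by
  interval_cases d
  · -- d = 0
    refine ⟨fun h => absurd h (by norm_num), fun h => absurd h (by norm_num),
      fun h => absurd h (by norm_num), fun _ => ?_⟩
    obtain ⟨a, ha⟩ := hom0 A0 h0
    obtain ⟨b, hb⟩ := hom0 A1 h1
    obtain ⟨c, hc⟩ := hom0 A2 h2
    obtain ⟨e, he⟩ := hom0 A3 h3
    exact ⟨a, b, c, e, ha, hb, hc, he⟩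
  · -- d = 1
    refine ⟨fun h => absurd h (by norm_num), fun h => absurd h (by norm_num),
      fun _ => ?_, fun h => absurd h (by norm_num)⟩
    obtain ⟨p0, p1, hA0⟩ := hom1 A0 h0
    obtain ⟨q0, q1, hA1⟩ := hom1 A1 h1
    obtain ⟨r0, r1, hA2⟩ := hom1 A2 h2
    obtain ⟨s0, s1, hA3⟩ := hom1 A3 h3
    subst hA0 hA1 hA2 hA3
    have E1 := congrArg (coeff (ee 0 0)) e1
    have E2 := congrArg (coeff (ee 0 0)) e2
    have E3 := congrArg (coeff (ee 0 0)) e3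
    have E4 := congrArg (coeff (ee 0 0)) e4
    have E5 := congrArg (coeff (ee 0 0)) e5
    simp [dX, dY, coeff_add, coeff_monomial] at E1 E2 E3 E4 E5
    have hq1 : q1 = -p0 := by linarith
    have hr1 : r1 = -q0 := by linarith
    have hs1 : s1 = -r0 := by linarith
    refine ⟨p0, q0, r0, ?_, ?_, ?_, ?_⟩ <;>
      · simp [E1, E5, hq1, hr1, hs1, mono_eq]
        try ring
  · -- d = 2
    refine ⟨fun h => absurd h (by norm_num), fun _ => ?_,
      fun h => absurd h (by norm_num), fun h => absurd h (by norm_num)⟩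
    obtain ⟨p0, p1, p2, hA0⟩ := hom2 A0 h0
    obtain ⟨q0, q1, q2, hA1⟩ := hom2 A1 h1
    obtain ⟨r0, r1, r2, hA2⟩ := hom2 A2 h2
    obtain ⟨s0, s1, s2, hA3⟩ := hom2 A3 h3
    subst hA0 hA1 hA2 hA3
    have E1a := congrArg (coeff (ee 0 1)) e1
    have E1b := congrArg (coeff (ee 1 0)) e1
    have E2a := congrArg (coeff (ee 0 1)) e2
    have E2b := congrArg (coeff (ee 1 0)) e2
    have E3a := congrArg (coeff (ee 0 1)) e3
    have E3b := congrArg (coeff (ee 1 0)) e3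
    have E4a := congrArg (coeff (ee 0 1)) e4
    have E4b := congrArg (coeff (ee 1 0)) e4
    have E5a := congrArg (coeff (ee 0 1)) e5
    have E5b := congrArg (coeff (ee 1 0)) e5
    simp [dX, dY, coeff_add, coeff_monomial] at E1a E1b E2a E2b E3a E3b E4a E4b E5a E5b
    have hq1 : q1 = -2 * p0 := by linarith
    have hq2 : q2 = 0 := by linarith
    have hr0 : r0 = 0 := by linarith
    have hr1 : r1 = -2 * q0 := by linarith
    have hr2 : r2 = p0 := by linarith
    have hs2 : s2 = q0 := by linarith
    refine ⟨p0, q0, ?_, ?_, ?_, ?_⟩ <;>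
      · simp [E1a, E1b, E5a, E5b, hq1, hq2, hr0, hr1, hr2, hs2, mono_eq]
        try ring
  · -- d = 3
    refine ⟨fun _ => ?_, fun h => absurd h (by norm_num),
      fun h => absurd h (by norm_num), fun h => absurd h (by norm_num)⟩
    obtain ⟨p0, p1, p2, p3, hA0⟩ := hom3 A0 h0
    obtain ⟨q0, q1, q2, q3, hA1⟩ := hom3 A1 h1
    obtain ⟨r0, r1, r2, r3, hA2⟩ := hom3 A2 h2
    obtain ⟨s0, s1, s2, s3, hA3⟩ := hom3 A3 h3
    subst hA0 hA1 hA2 hA3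
    have E1a := congrArg (coeff (ee 0 2)) e1
    have E1b := congrArg (coeff (ee 1 1)) e1
    have E1c := congrArg (coeff (ee 2 0)) e1
    have E2a := congrArg (coeff (ee 0 2)) e2
    have E2b := congrArg (coeff (ee 1 1)) e2
    have E2c := congrArg (coeff (ee 2 0)) e2
    have E3a := congrArg (coeff (ee 0 2)) e3
    have E3b := congrArg (coeff (ee 1 1)) e3
    have E3c := congrArg (coeff (ee 2 0)) e3
    have E4a := congrArg (coeff (ee 0 2)) e4
    have E4b := congrArg (coeff (ee 1 1)) e4
    have E4c := congrArg (coeff (ee 2 0)) e4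
    have E5a := congrArg (coeff (ee 0 2)) e5
    have E5b := congrArg (coeff (ee 1 1)) e5
    have E5c := congrArg (coeff (ee 2 0)) e5
    simp [dX, dY, coeff_add, coeff_monomial] at E1a E1b E1c E2a E2b E2c E3a E3b E3c E4a E4b E4c E5a E5b E5c
    have hq1 : q1 = -3 * p0 := by linarith
    have hq2 : q2 = 0 := by linarith
    have hq3 : q3 = 0 := by linarith
    have hr1 : r1 = 0 := by linarith
    have hq0 : q0 = 0 := by linarith
    have hr2 : r2 = 3 * p0 := by linarith
    have hr3 : r3 = 0 := by linarith
    have hr0 : r0 = 0 := by linarith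
    have hs3 : s3 = -p0 := by linarith
    refine ⟨p0, ?_, ?_, ?_, ?_⟩ <;>
      · simp [E1a, E1b, E1c, E5a, E5b, E5c, hq0, hq1, hq2, hq3, hr0, hr1, hr2, hr3, hs3, mono_eq]
        try ring
end

section
/- Suppose polynomials B₀, B₁ in ℝ[x,y] satisfy ∂B₀/∂x = 3A₀Vₓ + A₁V_y, ∂B₀/∂y + ∂B₁/∂x = 2A₁Vₓ + 2A₂V_y, ∂B₁/∂y = A₂Vₓ + 3A₃V_y for polynomials A₀, A₁, A₂, A₃, V. Then V satisfies the third-order linear PDE: A₂V_{xxx} + (3A₃ − 2A₁)V_{xxy} + (3A₀ − 2A₂)V_{xyy} + A₁V_{yyy} + 2(A₂ₓ − A₁_y)(V_{xx} − V_{yy}) + 2(3A₀_y − A₁ₓ − A₂_y + 3A₃ₓ)V_{xy} + (3A₀_{yy} − 2A₁_{xy} + A₂_{xx})Vₓ + (A₁_{yy} − 2A₂_{xy} + 3A₃_{xx})V_y = 0. -/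
open MvPolynomial

lemma pderiv_comm' {σ : Type*} [DecidableEq σ] (i j : σ) (p : MvPolynomial σ ℝ) :
    pderiv i (pderiv j p) = pderiv j (pderiv i p) := by
  induction p using MvPolynomial.induction_on' with
  | monomial s a =>
    rcases eq_or_ne i j with rfl | hij
    · rfl
    · simp only [pderiv_monomial]
      rw [Finsupp.tsub_apply, Finsupp.tsub_apply,
        Finsupp.single_eq_of_ne' (Ne.symm hij), Finsupp.single_eq_of_ne' hij,
        tsub_right_comm]
      simp only [Nat.sub_zero]
      ring_nf
  | add p q hp hq => simp [map_add, hp, hq]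

lemma dXY_comm (p : MvPolynomial (Fin 2) ℝ) : dX (dY p) = dY (dX p) :=
  pderiv_comm' _ _ p

lemma dX_add (p q : MvPolynomial (Fin 2) ℝ) : dX (p + q) = dX p + dX q := map_add _ _ _
lemma dY_add (p q : MvPolynomial (Fin 2) ℝ) : dY (p + q) = dY p + dY q := map_add _ _ _
lemma dX_mul (p q : MvPolynomial (Fin 2) ℝ) : dX (p * q) = dX p * q + p * dX q := pderiv_mul
lemma dY_mul (p q : MvPolynomial (Fin 2) ℝ) : dY (p * q) = dY p * q + p * dY q := pderiv_mul

theorem stmt12 (A0 A1 A2 A3 B0 B1 V : MvPolynomial (Fin 2) ℝ)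
    (e1 : dX B0 = 3 * A0 * dX V + A1 * dY V)
    (e2 : dY B0 + dX B1 = 2 * A1 * dX V + 2 * A2 * dY V)
    (e3 : dY B1 = A2 * dX V + 3 * A3 * dY V) :
    A2 * dX (dX (dX V))
      + (3 * A3 - 2 * A1) * dX (dX (dY V))
      + (3 * A0 - 2 * A2) * dX (dY (dY V))
      + A1 * dY (dY (dY V))
      + 2 * (dX A2 - dY A1) * (dX (dX V) - dY (dY V))
      + 2 * (3 * dY A0 - dX A1 - dY A2 + 3 * dX A3) * dX (dY V)
      + (3 * dY (dY A0) - 2 * dX (dY A1) + dX (dX A2)) * dX V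
      + (dY (dY A1) - 2 * dX (dY A2) + 3 * dX (dX A3)) * dY V = 0 := by
  have e1' : dX B0 = A0 * dX V + A0 * dX V + A0 * dX V + A1 * dY V := by
    linear_combination e1
  have e2' : dY B0 + dX B1 = A1 * dX V + A1 * dX V + (A2 * dY V + A2 * dY V) := by
    linear_combination e2
  have e3' : dY B1 = A2 * dX V + (A3 * dY V + A3 * dY V + A3 * dY V) := by
    linear_combination e3
  have h1 := congrArg (fun p => dY (dY p)) e1'
  have h2 := congrArg (fun p => dY (dX p)) e2'
  have h3 := congrArg (fun p => dX (dX p)) e3'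
  simp only [dX_add, dY_add, dX_mul, dY_mul, dXY_comm] at h1 h2 h3 ⊢
  linear_combination h2 - h1 - h3
end

section
/- Suppose polynomials B₀, B₁, B₂, C₀ in ℝ[x,y] satisfy ∂C₀/∂x = 2B₀Vₓ + B₁V_y and ∂C₀/∂y = B₁Vₓ + 2B₂V_y for a polynomial V. Then V satisfies: B₁(V_{xx} − V_{yy}) + 2(B₂ − B₀)V_{xy} + (B₁ₓ − 2B₀_y)Vₓ + (2B₂ₓ − B₁_y)V_y = 0. -/
open MvPolynomial

theorem stmt13 (B0 B1 B2 C0 V : MvPolynomial (Fin 2) ℝ)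
    (e1 : dX C0 = 2 * B0 * dX V + B1 * dY V)
    (e2 : dY C0 = B1 * dX V + 2 * B2 * dY V) :
    B1 * (dX (dX V) - dY (dY V))
      + 2 * (B2 - B0) * dX (dY V)
      + (dX B1 - 2 * dY B0) * dX V
      + (2 * dX B2 - dY B1) * dY V = 0 := by
  have h1 := congrArg dY e1
  have h2 := congrArg dX e2
  have hc := dXY_comm C0
  have hV := dXY_comm V
  simp only [dX, dY, map_add, pderiv_mul] at h1 h2 hc hV ⊢
  rw [← hc, h2] at h1
  have h2C : (2 : MvPolynomial (Fin 2) ℝ) = C (2:ℝ) := by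
    rw [map_ofNat]
  have z0 : (pderiv (0:Fin 2)) (2 : MvPolynomial (Fin 2) ℝ) = 0 := by
    rw [h2C]; exact pderiv_C
  have z1 : (pderiv (1:Fin 2)) (2 : MvPolynomial (Fin 2) ℝ) = 0 := by
    rw [h2C]; exact pderiv_C
  rw [z0, z1] at h1
  linear_combination h1 - 2*B0*hV
end
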